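/- For T large, the transcendental equation tanh(μT) = μ has a unique solution μ(T) ∈ (0,1), and μ(T) = 1 - 2e^{-2T} + o(e^{-2T}) as T → ∞; consequently -μ(T)² = -1 + 4e^{-2T} + o(e^{-2T}). -/

import Mathlib

open Real Set Asymptotics Filter

lemma aux_tanh_hasDeriv (x : ℝ) : HasDerivAt Real.tanh (1 / Real.cosh x ^ 2) x := by
  have h : Real.tanh = fun y => Real.sinh y / Real.cosh y := by
    funext y; exact Real.tanh_eq_sinh_div_cosh y
  rw [h]
  have := (Real.hasDerivAt_sinh x).div (Real.hasDerivAt_cosh x) (ne_of_gt (Real.cosh_pos x))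
  rw [show Real.cosh x * Real.cosh x - Real.sinh x * Real.sinh x = 1 by
    nlinarith [Real.cosh_sq_sub_sinh_sq x]] at this
  exact this

lemma aux_tanh_formula (x : ℝ) :
    Real.tanh x = 1 - 2 * Real.exp (-(2*x)) / (1 + Real.exp (-(2*x))) := by
  rw [Real.tanh_eq_sinh_div_cosh, Real.sinh_eq, Real.cosh_eq]
  have h2 : Real.exp (-(2*x)) = Real.exp (-x) * Real.exp (-x) := by
    rw [← Real.exp_add]; ring_nf
  have he : Real.exp x * Real.exp (-x) = 1 := by rw [← Real.exp_add]; simp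
  have hp : (0:ℝ) < Real.exp x + Real.exp (-x) := by positivity
  have hq : (0:ℝ) < 1 + Real.exp (-(2*x)) := by positivity
  field_simp
  rw [show -(x*2) = -(2*x) by ring, h2]; linear_combination (2 * Real.exp (-x)) * he



lemma aux_tanh_gt (x : ℝ) (hx : 0 < x) : x / (1 + x) < Real.tanh x := by
  rw [aux_tanh_formula]
  set u := Real.exp (-(2*x)) with hu
  have hup : 0 < u := Real.exp_pos _
  have key : u * (1 + 2*x) < 1 := by
    have h1 : 2*x + 1 < Real.exp (2*x) := by
      have := Real.add_one_lt_exp (x := 2*x) (by positivity : (0:ℝ) < 2*x).ne'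
      linarith
    have h2 : u * Real.exp (2*x) = 1 := by rw [hu, ← Real.exp_add]; simp
    nlinarith
  have h1x : (0:ℝ) < 1 + x := by linarith
  have h1u : (0:ℝ) < 1 + u := by linarith
  have heq : 1 - 2 * u / (1 + u) = (1 - u) / (1 + u) := by field_simp; ring
  rw [heq, div_lt_div_iff₀ h1x h1u]
  nlinarith

lemma aux_cosh_ge (y : ℝ) : Real.exp y / 2 ≤ Real.cosh y := by
  rw [Real.cosh_eq]
  have := Real.exp_pos (-y)
  linarith



lemma aux_tanh_lt_one (x : ℝ) : Real.tanh x < 1 := by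
  rw [aux_tanh_formula]
  have h1 : 0 < Real.exp (-(2*x)) := Real.exp_pos _
  have h2 : 0 < 1 + Real.exp (-(2*x)) := by linarith
  have : 0 < 2 * Real.exp (-(2*x)) / (1 + Real.exp (-(2*x))) := by positivity
  linarith

lemma aux_tanh_cont : Continuous Real.tanh := by
  have hdiff : Differentiable ℝ Real.tanh := fun x => (aux_tanh_hasDeriv x).differentiableAt
  exact hdiff.continuous

-- any fixed point in (0,1) is > 1 - 1/T
lemma aux_fp_lb (T μ : ℝ) (hT : 4 ≤ T) (h0 : 0 < μ) (h1 : μ < 1)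
    (heq : Real.tanh (μ * T) = μ) : 1 - 1/T < μ := by
  have hT0 : (0:ℝ) < T := by linarith
  have hx : 0 < μ * T := by nlinarith
  have h := aux_tanh_gt (μ*T) hx
  rw [heq] at h
  have h1x : (0:ℝ) < 1 + μ*T := by linarith
  rw [div_lt_iff₀ h1x] at h
  have h2 : T - 1 < μ * T := by nlinarith
  have h3 : (T-1)/T < μ := (div_lt_iff₀ hT0).mpr h2
  have h4 : 1 - 1/T = (T-1)/T := by field_simp
  linarith

lemma aux_exists_unique (T : ℝ) (hT : 4 ≤ T) :
    ∃! μ : ℝ, μ ∈ Ioo (0:ℝ) 1 ∧ Real.tanh (μ * T) = μ := by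
  have hT0 : (0:ℝ) < T := by linarith
  set a : ℝ := 1 - 1/T with ha
  have hinv : 1/T ≤ 1/4 := by
    rw [div_le_div_iff₀ hT0 (by norm_num : (0:ℝ) < 4)]; linarith
  have hinv0 : 0 < 1/T := by positivity
  have ha0 : 0 < a := by rw [ha]; linarith
  have ha1 : a < 1 := by rw [ha]; linarith
  have haT : a * T = T - 1 := by rw [ha]; field_simp
  set f : ℝ → ℝ := fun μ => Real.tanh (μ * T) - μ with hf
  have hfc : Continuous f := by
    apply Continuous.sub
    · exact aux_tanh_cont.comp (continuous_id.mul continuous_const)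
    · exact continuous_id
  -- f a > 0
  have hfa : 0 < f a := by
    have hx : 0 < T - 1 := by linarith
    have h := aux_tanh_gt (T-1) hx
    have hrw2 : (T-1)/(1+(T-1)) = a := by rw [ha]; field_simp; ring
    show 0 < Real.tanh (a * T) - a
    rw [haT]
    rw [hrw2] at h
    linarith
  -- f 1 < 0
  have hf1 : f 1 < 0 := by
    show Real.tanh (1 * T) - 1 < 0
    rw [one_mul]
    have := aux_tanh_lt_one T
    linarith
  -- strict anti on Icc a 1
  have hanti : StrictAntiOn f (Icc a 1) := by
    apply strictAntiOn_of_deriv_neg (convex_Icc a 1) (hfc.continuousOn)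
    intro x hx
    rw [interior_Icc] at hx
    have hD : HasDerivAt f (1 / Real.cosh (x*T) ^ 2 * T - 1) x := by
      have h1 : HasDerivAt (fun μ : ℝ => μ * T) T x := by
        simpa using (hasDerivAt_id x).mul_const T
      exact ((aux_tanh_hasDeriv (x*T)).comp x h1).sub (hasDerivAt_id x)
    rw [hD.deriv]
    have hxT : T - 1 < x * T := by
      have h5 := mul_lt_mul_of_pos_right hx.1 hT0
      linarith [haT]
    have hc : Real.exp (x*T) / 2 ≤ Real.cosh (x*T) := aux_cosh_ge _
    have he : T ≤ Real.exp (T-1) := by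
      have := Real.add_one_le_exp (T-1)
      linarith
    have he2 : Real.exp (T-1) < Real.exp (x*T) := Real.exp_lt_exp.2 hxT
    have hcosh : T < Real.cosh (x*T) ^ 2 := by
      have hep : 0 < Real.exp (x*T) := Real.exp_pos _
      nlinarith [Real.cosh_pos (x*T)]
    have hcp : 0 < Real.cosh (x*T) ^ 2 := by positivity
    rw [sub_neg, div_mul_eq_mul_div, div_lt_one hcp]
    linarith
  -- existence via IVT
  have hivt : (0:ℝ) ∈ f '' Ioo a 1 := by
    have h := intermediate_value_Ioo' (le_of_lt ha1) hfc.continuousOn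
    exact h ⟨hf1, hfa⟩
  obtain ⟨μ₀, hμ₀mem, hμ₀⟩ := hivt
  have hμ₀eq : Real.tanh (μ₀ * T) = μ₀ := by
    have : Real.tanh (μ₀ * T) - μ₀ = 0 := hμ₀
    linarith
  refine ⟨μ₀, ⟨⟨lt_trans ha0 hμ₀mem.1, hμ₀mem.2⟩, hμ₀eq⟩, ?_⟩
  rintro ν ⟨⟨hν0, hν1⟩, hνeq⟩
  have hνa : a < ν := by
    have := aux_fp_lb T ν hT hν0 hν1 hνeq
    rw [ha]; exact this
  have h1 : ν ∈ Icc a 1 := ⟨le_of_lt hνa, le_of_lt hν1⟩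
  have h2 : μ₀ ∈ Icc a 1 := ⟨le_of_lt hμ₀mem.1, le_of_lt hμ₀mem.2⟩
  apply hanti.injOn h1 h2
  show Real.tanh (ν * T) - ν = Real.tanh (μ₀ * T) - μ₀
  rw [hνeq, hμ₀eq]
  simp




lemma aux_alg (E Em ed e2 : ℝ) (hEp : 0 < E) (hEmp : 0 < Em)
    (hE_le : E ≤ Em) (hEm_le : Em ≤ e2 * E) (hEm_le2 : Em ≤ E * ed) (hd : 1 ≤ ed) :
    |2*E - 2*Em/(1+Em)| ≤ (2*(e2*e2)*E + 2*(ed-1)) * E := by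
  have hden : (0:ℝ) < 1 + Em := by linarith
  have hge : 2*Em/(1+Em) ≤ 2*Em := by
    rw [div_le_iff₀ hden]; nlinarith
  have hkey : 2*Em - 2*Em^2 ≤ 2*Em/(1+Em) := by
    rw [le_div_iff₀ hden]; nlinarith
  rw [abs_le]
  constructor
  · have l1 : -(2*E*(ed - 1)) ≤ 2*E - 2*Em/(1+Em) := by nlinarith
    have l2 : -((2*(e2*e2)*E + 2*(ed-1))*E) ≤ -(2*E*(ed-1)) := by nlinarith
    linarith
  · have u1 : 2*E - 2*Em/(1+Em) ≤ 2*Em^2 := by nlinarith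
    have u2 : 2*Em^2 ≤ 2*(e2*e2)*E^2 := by nlinarith
    have u3 : 2*(e2*e2)*E^2 ≤ (2*(e2*e2)*E + 2*(ed-1))*E := by nlinarith
    linarith

lemma aux_bounds (T m : ℝ) (hT : 4 ≤ T) (h0 : 0 < m) (h1 : m < 1)
    (heq : Real.tanh (m*T) = m) :
    (1 - m ≤ 2 * Real.exp 2 * Real.exp (-(2*T))) ∧
    |m - (1 - 2*Real.exp (-(2*T)))| ≤
      (2 * Real.exp 4 * Real.exp (-(2*T)) +
       2 * (Real.exp (4 * Real.exp 2 * (T * Real.exp (-(2*T)))) - 1)) * Real.exp (-(2*T)) := by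
  have hT0 : (0:ℝ) < T := by linarith
  set E := Real.exp (-(2*T)) with hE
  set Em := Real.exp (-(2*(m*T))) with hEm
  have hEp : 0 < E := Real.exp_pos _
  have hEmp : 0 < Em := Real.exp_pos _
  have hden : (0:ℝ) < 1 + Em := by linarith
  -- the equation
  have heq' : 1 - m = 2 * Em / (1 + Em) := by
    have := aux_tanh_formula (m*T)
    rw [heq] at this
    linarith
  -- m*T > T - 1
  have hmT : T - 1 < m * T := by
    have h := aux_fp_lb T m hT h0 h1 heq
    have h2 := mul_lt_mul_of_pos_right h hT0
    have : (1 - 1/T) * T = T - 1 := by field_simp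
    linarith
  -- Em ≤ e^2 * E
  have hEm_le : Em ≤ Real.exp 2 * E := by
    rw [hEm, hE, ← Real.exp_add]
    apply Real.exp_le_exp.2
    linarith
  -- E ≤ Em
  have hE_le : E ≤ Em := by
    rw [hEm, hE]
    apply Real.exp_le_exp.2
    nlinarith
  -- 1 - m ≤ 2 Em ≤ 2 e^2 E
  have h2Em : 2 * Em / (1 + Em) ≤ 2 * Em := by
    rw [div_le_iff₀ hden]
    nlinarith
  have h1m : 1 - m ≤ 2 * Real.exp 2 * E := by
    rw [heq']
    nlinarith
  refine ⟨h1m, ?_⟩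
  set δ := 4 * Real.exp 2 * (T * E) with hδ
  have hδ0 : 0 ≤ δ := by positivity
  -- Em ≤ E * exp δ
  have hEm_le2 : Em ≤ E * Real.exp δ := by
    have h3 : Em = E * Real.exp (2*T*(1-m)) := by
      rw [hEm, hE, ← Real.exp_add]
      congr 1
      ring
    rw [h3]
    have h4 : 2*T*(1-m) ≤ δ := by
      rw [hδ]
      nlinarith
    have := Real.exp_le_exp.2 h4
    nlinarith [Real.exp_pos (2*T*(1-m))]
  have hexpδ : 1 ≤ Real.exp δ := Real.one_le_exp hδ0
  -- r = 2E - 2Em/(1+Em)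
  have hr : m - (1 - 2*E) = 2*E - 2*Em/(1+Em) := by linarith
  have he4 : Real.exp 4 = Real.exp 2 * Real.exp 2 := by
    rw [← Real.exp_add]; norm_num
  rw [hr]
  have he4 : Real.exp 4 = Real.exp 2 * Real.exp 2 := by
    rw [← Real.exp_add]; norm_num
  have := aux_alg E Em (Real.exp δ) (Real.exp 2) hEp hEmp hE_le hEm_le hEm_le2 hexpδ
  calc |2*E - 2*Em/(1+Em)| ≤ (2*(Real.exp 2*Real.exp 2)*E + 2*(Real.exp δ-1)) * E := this
    _ = (2 * Real.exp 4 * E + 2 * (Real.exp δ - 1)) * E := by rw [he4]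


lemma aux_E_tendsto : Tendsto (fun T : ℝ => Real.exp (-(2*T))) atTop (nhds 0) := by
  have h2T : Tendsto (fun T : ℝ => 2*T) atTop atTop :=
    (tendsto_id.const_mul_atTop two_pos)
  exact Real.tendsto_exp_atBot.comp (tendsto_neg_atTop_atBot.comp h2T)

lemma aux_TE_tendsto : Tendsto (fun T : ℝ => T * Real.exp (-(2*T))) atTop (nhds 0) := by
  have h2T : Tendsto (fun T : ℝ => 2*T) atTop atTop :=
    (tendsto_id.const_mul_atTop two_pos)
  have h := (Real.tendsto_pow_mul_exp_neg_atTop_nhds_zero 1).comp h2T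
  have h2 := h.const_mul (1/2 : ℝ)
  simp only [mul_zero] at h2
  convert h2 using 2 with T
  simp [Function.comp]
  ring

lemma aux_g_tendsto :
    Tendsto (fun T : ℝ => 2 * Real.exp 4 * Real.exp (-(2*T)) +
      2 * (Real.exp (4 * Real.exp 2 * (T * Real.exp (-(2*T)))) - 1)) atTop (nhds 0) := by
  have h1 : Tendsto (fun T : ℝ => 2 * Real.exp 4 * Real.exp (-(2*T))) atTop (nhds 0) := by
    have := aux_E_tendsto.const_mul (2 * Real.exp 4)
    simpa using this
  have h2 : Tendsto (fun T : ℝ => 4 * Real.exp 2 * (T * Real.exp (-(2*T)))) atTop (nhds 0) := by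
    have := aux_TE_tendsto.const_mul (4 * Real.exp 2)
    simpa using this
  have h3 : Tendsto (fun T : ℝ =>
      Real.exp (4 * Real.exp 2 * (T * Real.exp (-(2*T))))) atTop (nhds 1) := by
    have := (Real.continuous_exp.tendsto 0).comp h2
    simpa [Function.comp_def] using this
  have h4 : Tendsto (fun T : ℝ =>
      2 * (Real.exp (4 * Real.exp 2 * (T * Real.exp (-(2*T)))) - 1)) atTop (nhds 0) := by
    have := (h3.sub_const 1).const_mul 2
    simpa using this
  simpa using h1.add h4

/-- For `T` large, `tanh(μT) = μ` has a unique solution `μ(T) ∈ (0,1)`, and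
`μ(T) = 1 - 2e^{-2T} + o(e^{-2T})`, hence `-μ(T)² = -1 + 4e^{-2T} + o(e^{-2T})`. -/
theorem stmt5 :
    ∃ T₀ > (0:ℝ),
      (∀ T ≥ T₀, ∃! μ : ℝ, μ ∈ Ioo (0:ℝ) 1 ∧ Real.tanh (μ * T) = μ) ∧
      ∀ μ : ℝ → ℝ, (∀ T ≥ T₀, μ T ∈ Ioo (0:ℝ) 1 ∧ Real.tanh (μ T * T) = μ T) →
        ((fun T => μ T - (1 - 2 * Real.exp (-2*T))) =o[atTop]
            fun T => Real.exp (-2*T)) ∧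
        ((fun T => -(μ T)^2 - (-1 + 4 * Real.exp (-2*T))) =o[atTop]
            fun T => Real.exp (-2*T)) := by
  have hconv : ∀ T : ℝ, Real.exp (-2*T) = Real.exp (-(2*T)) := by
    intro T; rw [neg_mul]
  refine ⟨4, by norm_num, fun T hT => aux_exists_unique T hT, ?_⟩
  intro μ hμ
  set E : ℝ → ℝ := fun T => Real.exp (-(2*T)) with hEdef
  set g : ℝ → ℝ := fun T => 2 * Real.exp 4 * E T +
      2 * (Real.exp (4 * Real.exp 2 * (T * E T)) - 1) with hgdef
  have hg : Tendsto g atTop (nhds 0) := aux_g_tendsto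
  -- the pointwise bounds for T ≥ 4
  have hbd : ∀ T : ℝ, 4 ≤ T →
      (1 - μ T ≤ 2 * Real.exp 2 * E T) ∧
      |μ T - (1 - 2 * E T)| ≤ g T * E T := by
    intro T hT4
    obtain ⟨⟨h0, h1⟩, heq⟩ := hμ T hT4
    exact aux_bounds T (μ T) hT4 h0 h1 heq
  have hEpos : ∀ T : ℝ, 0 < E T := fun T => Real.exp_pos _
  -- first littleO
  have hfirst : (fun T => μ T - (1 - 2 * E T)) =o[atTop] E := by
    rw [isLittleO_iff]
    intro c hc
    filter_upwards [eventually_ge_atTop (4:ℝ), hg.eventually (gt_mem_nhds hc)]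
      with T hT4 hgT
    have hb := (hbd T hT4).2
    rw [Real.norm_eq_abs, Real.norm_eq_abs, abs_of_pos (hEpos T)]
    calc |μ T - (1 - 2 * E T)| ≤ g T * E T := hb
      _ ≤ c * E T := by
          apply mul_le_mul_of_nonneg_right (le_of_lt hgT) (hEpos T).le
  constructor
  · simp only [hconv]
    exact hfirst
  · -- second littleO
    simp only [hconv]
    rw [isLittleO_iff]
    intro c hc
    have hc4 : (0:ℝ) < c/4 := by linarith
    have hEsmall : ∀ᶠ T : ℝ in atTop, E T < c / (8 * Real.exp 2) := by
      apply aux_E_tendsto.eventually (gt_mem_nhds (by positivity))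
    rw [isLittleO_iff] at hfirst
    filter_upwards [eventually_ge_atTop (4:ℝ), hfirst hc4, hEsmall]
      with T hT4 hr hE
    obtain ⟨⟨h0, h1⟩, _⟩ := hμ T hT4
    have hb1 := (hbd T hT4).1
    rw [Real.norm_eq_abs, Real.norm_eq_abs, abs_of_pos (hEpos T)] at hr ⊢
    set m := μ T with hm
    set r := m - (1 - 2 * E T) with hrdef
    have hiden : -(m:ℝ)^2 - (-1 + 4 * E T) = 2 * E T * (m - 1) - r * (1 + m) := by
      rw [hrdef]; ring
    rw [hiden]
    have habs : |2 * E T * (m - 1) - r * (1 + m)| ≤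
        2 * E T * (1 - m) + |r| * 2 := by
      have h2 : |2 * E T * (m - 1)| = 2 * E T * (1 - m) := by
        rw [abs_of_nonpos (by nlinarith [hEpos T])]; ring
      have h3 : |r * (1 + m)| ≤ |r| * 2 := by
        rw [abs_mul]
        apply mul_le_mul_of_nonneg_left _ (abs_nonneg r)
        rw [abs_of_pos (by linarith : (0:ℝ) < 1 + m)]
        linarith
      calc |2 * E T * (m - 1) - r * (1 + m)|
          ≤ |2 * E T * (m - 1)| + |r * (1 + m)| := abs_sub _ _
        _ ≤ 2 * E T * (1 - m) + |r| * 2 := by rw [h2]; linarith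
    have hterm1 : 2 * E T * (1 - m) ≤ (c/2) * E T := by
      have he2 : (0:ℝ) < Real.exp 2 := Real.exp_pos _
      have hE' : E T * (8 * Real.exp 2) < c := (lt_div_iff₀ (by positivity)).1 hE
      nlinarith [mul_le_mul_of_nonneg_left hb1 (hEpos T).le,
        mul_lt_mul_of_pos_right hE' (hEpos T)]
    have hterm2 : |r| * 2 ≤ (c/2) * E T := by
      have : |r| ≤ c/4 * E T := hr
      linarith
    calc |2 * E T * (m - 1) - r * (1 + m)| ≤ 2 * E T * (1 - m) + |r| * 2 := habs
      _ ≤ (c/2) * E T + (c/2) * E T := by linarith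
      _ = c * E T := by ring
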